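/- arXiv:1411.5922 — 2 statements merged into one kernel-verified Lean document; each statement's English description precedes it below -/
import Mathlib

section
/- Let T₁ be a closed linear relation from a Hilbert space ℌ to a Hilbert space 𝔎₁ and let T₂ be a closed linear relation from ℌ to a Hilbert space 𝔎₂. Then T₁*T₁ ≤ T₂*T₂ if and only if dom T₂ ⊆ dom T₁ and ‖(T₁)ₛ h‖ ≤ ‖(T₂)ₛ h‖ for all h ∈ dom T₂. -/
open scoped ComplexOrder

set_option synthInstance.maxHeartbeats 1000000
set_option maxHeartbeats 1000000

noncomputable section

variable {E F G : Type*}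

section Basic
variable [AddCommGroup E] [Module ℂ E] [AddCommGroup F] [Module ℂ F]
  [AddCommGroup G] [Module ℂ G]

/-- The domain of a linear relation. -/
def relDom (R : Submodule ℂ (E × F)) : Set E := Prod.fst '' (R : Set (E × F))

/-- The range of a linear relation. -/
def relRan (R : Submodule ℂ (E × F)) : Set F := Prod.snd '' (R : Set (E × F))

/-- The kernel of a linear relation. -/
def relKer (R : Submodule ℂ (E × F)) : Submodule ℂ E where
  carrier := {f | (f, (0 : F)) ∈ R}
  add_mem' := fun ha hb => by simpa using R.add_mem ha hb
  zero_mem' := R.zero_mem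
  smul_mem' := fun c _ ha => by simpa using R.smul_mem c ha

/-- The multivalued part of a linear relation. -/
def relMul (R : Submodule ℂ (E × F)) : Submodule ℂ F where
  carrier := {g | ((0 : E), g) ∈ R}
  add_mem' := fun ha hb => by simpa using R.add_mem ha hb
  zero_mem' := R.zero_mem
  smul_mem' := fun c _ ha => by simpa using R.smul_mem c ha

/-- The product (composition) `S R` of two linear relations. -/
def relComp (S : Submodule ℂ (F × G)) (R : Submodule ℂ (E × F)) :
    Submodule ℂ (E × G) where
  carrier := {p | ∃ φ : F, (p.1, φ) ∈ R ∧ (φ, p.2) ∈ S}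
  add_mem' := by
    rintro p q ⟨φ, h1, h2⟩ ⟨ψ, h3, h4⟩
    exact ⟨φ + ψ, by simpa using R.add_mem h1 h3, by simpa using S.add_mem h2 h4⟩
  zero_mem' := ⟨0, R.zero_mem, S.zero_mem⟩
  smul_mem' := by
    rintro c p ⟨φ, h1, h2⟩
    exact ⟨c • φ, by simpa using R.smul_mem c h1, by simpa using S.smul_mem c h2⟩

/-- The inverse of a linear relation. -/
def relInv (R : Submodule ℂ (E × F)) : Submodule ℂ (F × E) where
  carrier := {p | (p.2, p.1) ∈ R}
  add_mem' := fun ha hb => by simpa using R.add_mem ha hb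
  zero_mem' := R.zero_mem
  smul_mem' := fun c _ ha => by simpa using R.smul_mem c ha

/-- The scalar multiple `c H = {{f, c f'} : {f, f'} ∈ H}` of a linear relation. -/
def relSmul (c : ℝ) (R : Submodule ℂ (E × F)) : Submodule ℂ (E × F) where
  carrier := {p | ∃ f', (p.1, f') ∈ R ∧ p.2 = (c : ℂ) • f'}
  add_mem' := by
    rintro p q ⟨f, h1, h2⟩ ⟨g, h3, h4⟩
    refine ⟨f + g, by simpa using R.add_mem h1 h3, ?_⟩
    simp [h2, h4, smul_add]
  zero_mem' := ⟨0, R.zero_mem, by simp⟩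
  smul_mem' := by
    rintro a p ⟨f, h1, h2⟩
    refine ⟨a • f, by simpa using R.smul_mem a h1, ?_⟩
    rw [Prod.smul_snd, h2, smul_comm]

/-- The relation `H + x = {{f, f' + x f} : {f, f'} ∈ H}`. -/
def relAddScalar (R : Submodule ℂ (E × E)) (x : ℝ) : Submodule ℂ (E × E) where
  carrier := {p | ∃ f', (p.1, f') ∈ R ∧ p.2 = f' + (x : ℂ) • p.1}
  add_mem' := by
    rintro p q ⟨f, h1, h2⟩ ⟨g, h3, h4⟩
    refine ⟨f + g, by simpa using R.add_mem h1 h3, ?_⟩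
    simp only [Prod.fst_add, Prod.snd_add, h2, h4, smul_add]
    abel
  zero_mem' := ⟨0, R.zero_mem, by simp⟩
  smul_mem' := by
    rintro a p ⟨f, h1, h2⟩
    refine ⟨a • f, by simpa using R.smul_mem a h1, ?_⟩
    rw [Prod.smul_snd, Prod.smul_fst, h2, smul_add, smul_comm]

end Basic

section Hilbert

variable [NormedAddCommGroup E] [InnerProductSpace ℂ E]
  [NormedAddCommGroup F] [InnerProductSpace ℂ F]
  [NormedAddCommGroup G] [InnerProductSpace ℂ G]

/-- The graph of a bounded everywhere defined operator, as a linear relation. -/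
def graphRel (W : E →L[ℂ] F) : Submodule ℂ (E × F) :=
  LinearMap.graph (W : E →ₗ[ℂ] F)

/-- The adjoint of a linear relation:
`H* = {{k, k'} : ⟨f', k⟩ = ⟨f, k'⟩ for all {f, f'} ∈ H}`. -/
def relAdj (R : Submodule ℂ (E × F)) : Submodule ℂ (F × E) where
  carrier := {q | ∀ p ∈ R, (inner ℂ p.2 q.1 : ℂ) = inner ℂ p.1 q.2}
  add_mem' := by
    intro a b ha hb p hp
    simp only [Prod.fst_add, Prod.snd_add, inner_add_right]
    rw [ha p hp, hb p hp]
  zero_mem' := by intro p hp; simp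
  smul_mem' := by
    intro c q hq p hp
    simp only [Prod.smul_fst, Prod.smul_snd, inner_smul_right]
    rw [hq p hp]

/-- A linear relation in a Hilbert space is nonnegative if `⟨h', h⟩ ≥ 0`
for all `{h, h'}` in the relation. -/
def relNonneg (R : Submodule ℂ (E × E)) : Prop :=
  ∀ p ∈ R, 0 ≤ (inner ℂ p.2 p.1 : ℂ)

/-- A linear relation in a Hilbert space is selfadjoint if `H = H*`. -/
def relSelfAdj (R : Submodule ℂ (E × E)) : Prop := relAdj R = R

/-- The operator part `Hₛ = {{f, P f'} : {f, f'} ∈ H}` of a linear relation,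
where `P` is the orthogonal projection onto `(mul H)ᗮ`. -/
def opPart [CompleteSpace F] (R : Submodule ℂ (E × F)) : Submodule ℂ (E × F) where
  carrier := {p | ∃ f' : F, (p.1, f') ∈ R ∧
      p.2 = (Submodule.orthogonalProjectionOnto (relMul R)ᗮ f' : F)}
  add_mem' := by
    rintro p q ⟨f, h1, h2⟩ ⟨g, h3, h4⟩
    refine ⟨f + g, by simpa using R.add_mem h1 h3, ?_⟩
    simp [h2, h4]
  zero_mem' := ⟨0, R.zero_mem, by simp⟩
  smul_mem' := by
    rintro c p ⟨f, h1, h2⟩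
    refine ⟨c • f, by simpa using R.smul_mem c h1, ?_⟩
    simp [h2]

/-- The ordering of nonnegative selfadjoint relations: `H₁ ≤ H₂` iff, with `Kᵢ`
the (unique) nonnegative selfadjoint square root of `Hᵢ`, one has
`dom K₂ ⊆ dom K₁` and `‖(K₁)ₛ h‖ ≤ ‖(K₂)ₛ h‖` for all `h ∈ dom K₂`. -/
def RelLE [CompleteSpace E] (H₁ H₂ : Submodule ℂ (E × E)) : Prop :=
  ∃ K₁ K₂ : Submodule ℂ (E × E),
    relNonneg K₁ ∧ relSelfAdj K₁ ∧ relComp K₁ K₁ = H₁ ∧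
    relNonneg K₂ ∧ relSelfAdj K₂ ∧ relComp K₂ K₂ = H₂ ∧
    relDom K₂ ⊆ relDom K₁ ∧
    ∀ h k₁ k₂, (h, k₁) ∈ opPart K₁ → (h, k₂) ∈ opPart K₂ → ‖k₁‖ ≤ ‖k₂‖

end Hilbert


section PartA

variable {E F : Type*} [NormedAddCommGroup E] [InnerProductSpace ℂ E]
  [NormedAddCommGroup F] [InnerProductSpace ℂ F]

lemma mem_relDom {R : Submodule ℂ (E × F)} {x : E} :
    x ∈ relDom R ↔ ∃ y, (x, y) ∈ R := by
  constructor
  · rintro ⟨⟨a, b⟩, hab, rfl⟩; exact ⟨b, hab⟩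
  · rintro ⟨y, hy⟩; exact ⟨(x, y), hy, rfl⟩

lemma relAdj_pairing {R : Submodule ℂ (E × F)} {k : F} {k' : E} {f : E} {f' : F}
    (hq : (k, k') ∈ relAdj R) (hp : (f, f') ∈ R) :
    (inner ℂ f' k : ℂ) = inner ℂ f k' := hq (f, f') hp

lemma relAdj_isClosed (R : Submodule ℂ (E × F)) :
    IsClosed ((relAdj R : Submodule ℂ (F × E)) : Set (F × E)) := by
  have : ((relAdj R : Submodule ℂ (F × E)) : Set (F × E)) =
      ⋂ p ∈ (R : Set (E × F)), {q : F × E | (inner ℂ p.2 q.1 : ℂ) = inner ℂ p.1 q.2} := by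
    ext q; simp only [Set.mem_iInter, Set.mem_setOf_eq, SetLike.mem_coe]; rfl
  rw [this]
  refine isClosed_biInter fun p _ => isClosed_eq ?_ ?_
  · exact Continuous.inner continuous_const continuous_fst
  · exact Continuous.inner continuous_const continuous_snd

lemma relMul_isClosed {R : Submodule ℂ (E × F)} (hR : IsClosed (R : Set (E × F))) :
    IsClosed ((relMul R : Submodule ℂ F) : Set F) := by
  have : ((relMul R : Submodule ℂ F) : Set F) = (fun g : F => ((0 : E), g)) ⁻¹' R := rfl
  rw [this]
  exact hR.preimage (by fun_prop)

end PartA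
section PartB

variable {E F : Type*} [NormedAddCommGroup E] [InnerProductSpace ℂ E]
  [NormedAddCommGroup F] [InnerProductSpace ℂ F] [CompleteSpace F]

lemma opPart_mem {R : Submodule ℂ (E × F)} {f : E} {g : F} (h : (f, g) ∈ R) :
    (f, (Submodule.orthogonalProjectionOnto (relMul R)ᗮ g : F)) ∈ opPart R := ⟨g, h, rfl⟩

lemma proj_relMul_zero {R : Submodule ℂ (E × F)} {v : F} (hv : v ∈ relMul R) :
    (Submodule.orthogonalProjectionOnto (relMul R)ᗮ v : F) = 0 := by
  have : v ∈ ((relMul R)ᗮ)ᗮ := (relMul R).le_orthogonal_orthogonal hv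
  simp [Submodule.orthogonalProjectionOnto_apply_of_mem_orthogonal this]

lemma opPart_unique {R : Submodule ℂ (E × F)} {f : E} {k k' : F}
    (h : (f, k) ∈ opPart R) (h' : (f, k') ∈ opPart R) : k = k' := by
  obtain ⟨g, hg, rfl⟩ := h
  obtain ⟨g', hg', rfl⟩ := h'
  have hm : g - g' ∈ relMul R := by
    have : ((0 : E), g - g') ∈ R := by
      have := R.sub_mem hg hg'; simpa using this
    exact this
  have := proj_relMul_zero hm
  rw [map_sub] at this
  have : (Submodule.orthogonalProjectionOnto (relMul R)ᗮ g : F) - Submodule.orthogonalProjectionOnto (relMul R)ᗮ g' = 0 := by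
    exact_mod_cast this
  linear_combination (norm := module) this

lemma opPart_subset {R : Submodule ℂ (E × F)} (hR : IsClosed (R : Set (E × F)))
    {f : E} {k : F} (h : (f, k) ∈ opPart R) :
    (f, k) ∈ R ∧ k ∈ (relMul R)ᗮ := by
  obtain ⟨g, hg, rfl⟩ := h
  refine ⟨?_, SetLike.coe_mem _⟩
  haveI : CompleteSpace (relMul R) := (relMul_isClosed hR).completeSpace_coe
  have hsub : g - (Submodule.orthogonalProjectionOnto (relMul R)ᗮ g : F) ∈ relMul R := by
    have := Submodule.sub_starProjection_mem_orthogonal (K := (relMul R)ᗮ) g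
    rwa [Submodule.orthogonal_orthogonal] at this
  have h0 : ((0 : E), g - (Submodule.orthogonalProjectionOnto (relMul R)ᗮ g : F)) ∈ R := hsub
  have := R.sub_mem hg h0
  simpa using this

lemma exists_opPart {R : Submodule ℂ (E × F)} {f : E} (h : f ∈ relDom R) :
    ∃ k, (f, k) ∈ opPart R := by
  obtain ⟨y, hy⟩ := mem_relDom.mp h
  exact ⟨_, opPart_mem hy⟩

end PartB
section PartV

open scoped InnerProductSpace

variable {H K : Type*} [NormedAddCommGroup H] [InnerProductSpace ℂ H] [CompleteSpace H]
  [NormedAddCommGroup K] [InnerProductSpace ℂ K] [CompleteSpace K]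

section pointwise

variable {S : Submodule ℂ (H × K)}

/-- Pointwise von Neumann decomposition. -/
lemma vn_exists (hS : IsClosed (S : Set (H × K))) (h : H) :
    ∃ f g, (f, g) ∈ S ∧ (g, h - f) ∈ relAdj S ∧ ‖f‖ ^ 2 + ‖g‖ ^ 2 ≤ ‖h‖ ^ 2 := by
  classical
  set e := WithLp.prodContinuousLinearEquiv 2 ℂ H K with he
  set S' : Submodule ℂ (WithLp 2 (H × K)) := S.comap (e : WithLp 2 (H × K) →ₗ[ℂ] H × K) with hS'
  have hS'c : IsClosed (S' : Set (WithLp 2 (H × K))) := by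
    have : (S' : Set (WithLp 2 (H × K))) = e ⁻¹' (S : Set (H × K)) := rfl
    rw [this]; exact hS.preimage e.continuous
  haveI : CompleteSpace S' := hS'c.completeSpace_coe
  set v : WithLp 2 (H × K) := e.symm (h, 0) with hv
  set q : WithLp 2 (H × K) := (Submodule.orthogonalProjectionOnto S' v : WithLp 2 (H × K)) with hq
  have hqS : (e q) ∈ S := (Submodule.orthogonalProjectionOnto S' v).2
  have hperp : v - q ∈ S'ᗮ := Submodule.sub_starProjection_mem_orthogonal (K := S') v
  refine ⟨(e q).1, (e q).2, by simpa using hqS, ?_, ?_⟩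
  · -- adjoint membership
    rintro ⟨x, y⟩ hxy
    have hx' : e.symm (x, y) ∈ S' := by
      simp only [hS', Submodule.mem_comap]
      simpa using hxy
    have horth := (Submodule.mem_orthogonal S' (v - q)).mp hperp _ hx'
    -- inner in WithLp 2 prod
    have : (inner ℂ x ((v - q).fst) : ℂ) + inner ℂ y ((v - q).snd) = 0 := by
      exact horth
    have h1 : (v - q).fst = h - (e q).1 := by
      simp [hv, he, WithLp.sub_fst]
    have h2 : (v - q).snd = -(e q).2 := by
      simp [hv, he, WithLp.sub_snd]
    rw [h1, h2] at this
    simp only [inner_neg_right] at this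
    have : (inner ℂ y ((e q).2) : ℂ) = inner ℂ x (h - (e q).1) := by linear_combination -this
    exact this
  · have hpy : ‖q‖ ^ 2 ≤ ‖v‖ ^ 2 := by
      have h1 : ‖v‖ ^ 2 = ‖q‖ ^ 2 + ‖v - q‖ ^ 2 := by
        have := norm_add_sq_eq_norm_sq_add_norm_sq_of_inner_eq_zero (𝕜 := ℂ) q (v - q)
          (Submodule.inner_right_of_mem_orthogonal (Submodule.orthogonalProjectionOnto S' v).2 hperp)
        rw [add_sub_cancel] at this
        simp only [sq]; exact this
      nlinarith [sq_nonneg ‖v - q‖]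
    have hvn : ‖v‖ = ‖h‖ := by
      have : ‖v‖ ^ 2 = ‖h‖ ^ 2 + ‖(0 : K)‖ ^ 2 := WithLp.prod_norm_sq_eq_of_L2 v
      simp at this
      nlinarith [norm_nonneg v, norm_nonneg h]
    have hqn : ‖q‖ ^ 2 = ‖(e q).1‖ ^ 2 + ‖(e q).2‖ ^ 2 := by
      have := WithLp.prod_norm_sq_eq_of_L2 q
      exact this
    rw [← hqn, ← hvn]; exact hpy

end pointwise

end PartV
section PartVb

variable {H K : Type*} [NormedAddCommGroup H] [InnerProductSpace ℂ H] [CompleteSpace H]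
  [NormedAddCommGroup K] [InnerProductSpace ℂ K] [CompleteSpace K]
  {S : Submodule ℂ (H × K)}

lemma vn_unique {h f f' : H} {g g' : K}
    (h1 : (f, g) ∈ S) (h2 : (g, h - f) ∈ relAdj S)
    (h3 : (f', g') ∈ S) (h4 : (g', h - f') ∈ relAdj S) : f = f' ∧ g = g' := by
  have hd : (f - f', g - g') ∈ S := by simpa using S.sub_mem h1 h3
  have ha : (g - g', (h - f) - (h - f')) ∈ relAdj S := by
    simpa using (relAdj S).sub_mem h2 h4
  have hp := relAdj_pairing ha hd
  have hff : (h - f) - (h - f') = -(f - f') := by abel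
  rw [hff] at hp
  rw [inner_neg_right, inner_self_eq_norm_sq_to_K, inner_self_eq_norm_sq_to_K] at hp
  norm_cast at hp
  have : (‖g - g'‖ : ℝ) ^ 2 + ‖f - f'‖ ^ 2 = 0 := by linarith
  have h5 : ‖g - g'‖ = 0 := by nlinarith [norm_nonneg (g - g'), norm_nonneg (f - f')]
  have h6 : ‖f - f'‖ = 0 := by nlinarith [norm_nonneg (g - g'), norm_nonneg (f - f')]
  constructor
  · have := norm_eq_zero.mp h6; linear_combination (norm := module) this
  · have := norm_eq_zero.mp h5; linear_combination (norm := module) this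

/-- The bounded operators `C = (I + S*S)⁻¹` and `G = S (I + S*S)⁻¹`. -/
lemma vn_operators (hS : IsClosed (S : Set (H × K))) :
    ∃ (C : H →L[ℂ] H) (G : H →L[ℂ] K),
      (∀ h, (C h, G h) ∈ S) ∧ (∀ h, (G h, h - C h) ∈ relAdj S) ∧
      (∀ h, ‖C h‖ ^ 2 + ‖G h‖ ^ 2 ≤ ‖h‖ ^ 2) := by
  classical
  choose f g hfg hadj hnorm using vn_exists (S := S) hS
  have huniq : ∀ h f' g', (f', g') ∈ S → (g', h - f') ∈ relAdj S → f' = f h ∧ g' = g h :=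
    fun h f' g' h1 h2 => vn_unique h1 h2 (hfg h) (hadj h)
  have hadd : ∀ x y, f (x + y) = f x + f y ∧ g (x + y) = g x + g y := by
    intro x y
    have h1 : (f x + f y, g x + g y) ∈ S := S.add_mem (hfg x) (hfg y)
    have h2 : (g x + g y, (x + y) - (f x + f y)) ∈ relAdj S := by
      have := (relAdj S).add_mem (hadj x) (hadj y)
      have hh : (x - f x) + (y - f y) = (x + y) - (f x + f y) := by abel
      simpa [Prod.mk_add_mk, hh] using this
    have := huniq (x + y) _ _ h1 h2
    exact ⟨this.1.symm, this.2.symm⟩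
  have hsmul : ∀ (c : ℂ) x, f (c • x) = c • f x ∧ g (c • x) = c • g x := by
    intro c x
    have h1 : (c • f x, c • g x) ∈ S := by simpa using S.smul_mem c (hfg x)
    have h2 : (c • g x, c • x - c • f x) ∈ relAdj S := by
      have := (relAdj S).smul_mem c (hadj x)
      simpa [smul_sub] using this
    have := huniq (c • x) _ _ h1 h2
    exact ⟨this.1.symm, this.2.symm⟩
  have hbf : ∀ h, ‖f h‖ ≤ 1 * ‖h‖ := by
    intro h; rw [one_mul]
    have := hnorm h
    nlinarith [norm_nonneg (f h), norm_nonneg (g h), norm_nonneg h, sq_nonneg ‖g h‖]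
  have hbg : ∀ h, ‖g h‖ ≤ 1 * ‖h‖ := by
    intro h; rw [one_mul]
    have := hnorm h
    nlinarith [norm_nonneg (f h), norm_nonneg (g h), norm_nonneg h, sq_nonneg ‖f h‖]
  refine ⟨LinearMap.mkContinuous ⟨⟨f, fun x y => (hadd x y).1⟩, fun c x => (hsmul c x).1⟩ 1 hbf,
    LinearMap.mkContinuous ⟨⟨g, fun x y => (hadd x y).2⟩, fun c x => (hsmul c x).2⟩ 1 hbg,
    hfg, hadj, hnorm⟩

end PartVb
section PartC

variable {H K : Type*} [NormedAddCommGroup H] [InnerProductSpace ℂ H] [CompleteSpace H]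
  [NormedAddCommGroup K] [InnerProductSpace ℂ K] [CompleteSpace K]
  {S : Submodule ℂ (H × K)} {C : H →L[ℂ] H} {G : H →L[ℂ] K}

/-- Membership in `S*S` in terms of the resolvent-type operator `C`. -/
lemma AA_mem_iff (hC : ∀ h, (C h, G h) ∈ S) (hG : ∀ h, (G h, h - C h) ∈ relAdj S)
    {p : H × H} : p ∈ relComp (relAdj S) S ↔ ∃ h, p = (C h, h - C h) := by
  constructor
  · rintro ⟨φ, h1, h2⟩
    refine ⟨p.1 + p.2, ?_⟩
    have h2' : (φ, (p.1 + p.2) - p.1) ∈ relAdj S := by simpa using h2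
    have := vn_unique h1 h2' (hC (p.1 + p.2)) (hG (p.1 + p.2))
    have hp1 : p.1 = C (p.1 + p.2) := this.1
    ext
    · exact hp1
    · simp only
      rw [← hp1]; abel
  · rintro ⟨h, rfl⟩
    exact ⟨G h, hC h, hG h⟩

lemma AA_nonneg_mem (hC : ∀ h, (C h, G h) ∈ S) (hG : ∀ h, (G h, h - C h) ∈ relAdj S) (h : H) :
    (C h, h - C h) ∈ relComp (relAdj S) S :=
  (AA_mem_iff hC hG).mpr ⟨h, rfl⟩

lemma vnC_inner (hC : ∀ h, (C h, G h) ∈ S) (hG : ∀ h, (G h, h - C h) ∈ relAdj S) (x y : H) :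
    (inner ℂ (C x) y : ℂ) = inner ℂ (C x) (C y) + inner ℂ (G x) (G y) := by
  have hp := relAdj_pairing (hG y) (hC x)
  -- inner (G x) (G y) = inner (C x) (y - C y)
  have : (inner ℂ (C x) y : ℂ) = inner ℂ (C x) (C y) + inner ℂ (C x) (y - C y) := by
    rw [← inner_add_right]
    congr 1
    abel
  rw [this, hp]

lemma vnC_symm (hC : ∀ h, (C h, G h) ∈ S) (hG : ∀ h, (G h, h - C h) ∈ relAdj S) (x y : H) :
    (inner ℂ (C x) y : ℂ) = inner ℂ x (C y) := by
  rw [vnC_inner hC hG x y]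
  have := vnC_inner hC hG y x
  have h2 : (inner ℂ x (C y) : ℂ) = starRingEnd ℂ (inner ℂ (C y) x : ℂ) := (inner_conj_symm _ _).symm
  rw [h2, this]
  simp only [map_add]
  rw [inner_conj_symm, inner_conj_symm]

lemma vnC_quad (hC : ∀ h, (C h, G h) ∈ S) (hG : ∀ h, (G h, h - C h) ∈ relAdj S) (x : H) :
    (inner ℂ (C x) x : ℂ) = ((‖C x‖ ^ 2 + ‖G x‖ ^ 2 : ℝ) : ℂ) := by
  rw [vnC_inner hC hG x x, inner_self_eq_norm_sq_to_K, inner_self_eq_norm_sq_to_K]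
  norm_cast

/-- The key norm-square identity `‖(Sₛ) f‖² = ⟨f, S*S f⟩` on `dom S*S`. -/
lemma opPart_normSq (hS : IsClosed (S : Set (H × K))) {f : H} {w : H} {k : K}
    (hw : (f, w) ∈ relComp (relAdj S) S) (hk : (f, k) ∈ opPart S) :
    (inner ℂ k k : ℂ) = inner ℂ f w := by
  obtain ⟨φ, h1, h2⟩ := hw
  have hkφ : k = (Submodule.orthogonalProjectionOnto (relMul S)ᗮ φ : K) := opPart_unique hk (opPart_mem h1)
  have hk' := opPart_subset hS hk
  have hp1 : (inner ℂ φ φ : ℂ) = inner ℂ f w := relAdj_pairing h2 h1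
  have hp2 : (inner ℂ k φ : ℂ) = inner ℂ f w := relAdj_pairing h2 hk'.1
  have hmul : φ - k ∈ relMul S := by
    have : ((0 : H), φ - k) ∈ S := by simpa using S.sub_mem h1 hk'.1
    exact this
  have horth : (inner ℂ (φ - k) k : ℂ) = 0 := (Submodule.mem_orthogonal _ k).mp hk'.2 _ hmul
  have horth' : (inner ℂ k (φ - k) : ℂ) = 0 := by
    rw [← inner_conj_symm, horth, map_zero]
  have : (inner ℂ k φ : ℂ) = inner ℂ k k := by
    have := inner_sub_right (𝕜 := ℂ) k φ k
    rw [show φ - k = φ - k from rfl] at horth'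
    calc (inner ℂ k φ : ℂ) = inner ℂ k k + inner ℂ k (φ - k) := by
          rw [← inner_add_right]; congr 1; abel
      _ = inner ℂ k k := by rw [horth', add_zero]
  rw [← this, hp2]

end PartC
section PartD

open Filter

variable {H K : Type*} [NormedAddCommGroup H] [InnerProductSpace ℂ H] [CompleteSpace H]
  [NormedAddCommGroup K] [InnerProductSpace ℂ K] [CompleteSpace K]
  {S : Submodule ℂ (H × K)}

lemma dense_graph (hS : IsClosed (S : Set (H × K))) {x : H} {y : K} (hxy : (x, y) ∈ S) :
    ∃ (f : ℕ → H) (g : ℕ → K), (∀ n, (f n, g n) ∈ S) ∧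
      (∀ n, f n ∈ relDom (relComp (relAdj S) S)) ∧
      Tendsto f atTop (nhds x) ∧ Tendsto g atTop (nhds y) := by
  classical
  obtain ⟨C, G, hC, hG, -⟩ := vn_operators hS
  set e := WithLp.prodContinuousLinearEquiv 2 ℂ H K with he
  set S' : Submodule ℂ (WithLp 2 (H × K)) := S.comap (e : WithLp 2 (H × K) →ₗ[ℂ] H × K) with hS'
  have hS'c : IsClosed (S' : Set (WithLp 2 (H × K))) := hS.preimage e.continuous
  haveI : CompleteSpace S' := hS'c.completeSpace_coe
  set A : Submodule ℂ (H × H) := relComp (relAdj S) S with hA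
  set DomSub : Submodule ℂ H := A.map (LinearMap.fst ℂ H H) with hD
  have hDomSub : ∀ v : H, v ∈ DomSub ↔ v ∈ relDom A := by
    intro v
    simp only [hD, Submodule.mem_map]
    constructor
    · rintro ⟨⟨a, b⟩, hab, rfl⟩; exact ⟨(a, b), hab, rfl⟩
    · rintro ⟨⟨a, b⟩, hab, rfl⟩; exact ⟨(a, b), hab, rfl⟩
  -- the submodule G'' of the Hilbert space S'
  set Gs : Submodule ℂ S' := Submodule.comap S'.subtype
    (Submodule.comap ((LinearMap.fst ℂ H K).comp (e : WithLp 2 (H × K) →ₗ[ℂ] H × K)) DomSub)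
    with hGs
  have hGsmem : ∀ z : S', z ∈ Gs ↔ (e z.val).1 ∈ DomSub := fun z => Iff.rfl
  -- Gs is dense in S'
  have horth : Gsᗮ = ⊥ := by
    rw [Submodule.eq_bot_iff]
    intro z hz
    have hzS : e z.val ∈ S := z.2
    -- first component of z is 0
    have hx0 : (e z.val).1 = 0 := by
      have key : ∀ h : H, (inner ℂ h ((e z.val).1) : ℂ) = 0 := by
        intro h
        have humem : e.symm (C h, G h) ∈ S' := by
          simp only [hS', Submodule.mem_comap]
          simpa using hC h
        set u : S' := ⟨e.symm (C h, G h), humem⟩ with hu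
        have huGs : u ∈ Gs := by
          rw [hGsmem]
          simp only [hu]
          rw [hDomSub]
          have : (e (e.symm (C h, G h))).1 = C h := by simp
          rw [this]
          exact ⟨(C h, h - C h), ⟨G h, hC h, hG h⟩, rfl⟩
        have h0 := (Submodule.mem_orthogonal Gs z).mp hz u huGs
        -- unfold the inner product on S' and WithLp 2
        have h0' : (inner ℂ (C h) ((e z.val).1) : ℂ) + inner ℂ (G h) ((e z.val).2) = 0 := by
          have : (inner ℂ u.val z.val : ℂ) = 0 := h0
          have hval : (inner ℂ (u.val.fst) (z.val.fst) : ℂ) + inner ℂ (u.val.snd) (z.val.snd) = 0 := by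
            simpa using this
          have e1 : u.val.fst = C h := rfl
          have e2 : u.val.snd = G h := rfl
          have e3 : z.val.fst = (e z.val).1 := rfl
          have e4 : z.val.snd = (e z.val).2 := rfl
          rw [e1, e2, e3, e4] at hval
          exact hval
        have hpair := relAdj_pairing (hG h) hzS
        -- ⟪(e z.val).2, G h⟫ = ⟪(e z.val).1, h - C h⟫
        have hpair' : (inner ℂ ((e z.val).2) (G h) : ℂ) = inner ℂ ((e z.val).1) (h - C h) := hpair
        have hGy : (inner ℂ (G h) ((e z.val).2) : ℂ) = inner ℂ (h - C h) ((e z.val).1) := by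
          rw [← inner_conj_symm, hpair', inner_conj_symm]
        rw [hGy, inner_sub_left] at h0'
        calc (inner ℂ h ((e z.val).1) : ℂ)
            = inner ℂ (C h) ((e z.val).1) + (inner ℂ h ((e z.val).1) - inner ℂ (C h) ((e z.val).1)) := by
              ring
          _ = 0 := h0'
      have := key ((e z.val).1)
      exact inner_self_eq_zero.mp this
    -- now z itself lies in Gs, hence z = 0
    have hzGs : z ∈ Gs := by
      rw [hGsmem, hx0]
      exact DomSub.zero_mem
    have := (Submodule.mem_orthogonal Gs z).mp hz z hzGs
    exact inner_self_eq_zero.mp this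
  have hdense : Gs.topologicalClosure = ⊤ := by
    have h1 : Gsᗮᗮ = Gs.topologicalClosure := Gs.orthogonal_orthogonal_eq_closure
    rw [← h1, horth, Submodule.bot_orthogonal_eq_top]
  -- extract a sequence converging to (x, y)
  have hzS' : e.symm (x, y) ∈ S' := by
    simp only [hS', Submodule.mem_comap]; simpa using hxy
  set z0 : S' := ⟨e.symm (x, y), hzS'⟩ with hz0
  have hz0cl : z0 ∈ closure (Gs : Set S') := by
    have : z0 ∈ Gs.topologicalClosure := by rw [hdense]; trivial
    exact this
  obtain ⟨u, hu, hulim⟩ := mem_closure_iff_seq_limit.mp hz0cl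
  refine ⟨fun n => (e (u n).val).1, fun n => (e (u n).val).2, ?_, ?_, ?_, ?_⟩
  · intro n
    have : e (u n).val ∈ S := (u n).2
    simpa using this
  · intro n
    have := (hGsmem (u n)).mp (hu n)
    exact (hDomSub _).mp this
  · have hcont : Continuous fun z : S' => (e z.val).1 :=
      (continuous_fst.comp (e.continuous.comp continuous_subtype_val))
    have := (hcont.tendsto z0).comp hulim
    simpa [hz0, Function.comp_def] using this
  · have hcont : Continuous fun z : S' => (e z.val).2 :=
      (continuous_snd.comp (e.continuous.comp continuous_subtype_val))
    have := (hcont.tendsto z0).comp hulim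
    simpa [hz0, Function.comp_def] using this

end PartD
section PartE

open Filter

variable {H K₁ K₂ : Type*} [NormedAddCommGroup H] [InnerProductSpace ℂ H] [CompleteSpace H]
  [NormedAddCommGroup K₁] [InnerProductSpace ℂ K₁] [CompleteSpace K₁]
  [NormedAddCommGroup K₂] [InnerProductSpace ℂ K₂] [CompleteSpace K₂]

lemma norm_eq_of_inner_self {a : K₁} {b : K₂} (h : (inner ℂ a a : ℂ) = inner ℂ b b) : ‖a‖ = ‖b‖ := by
  rw [inner_self_eq_norm_sq_to_K, inner_self_eq_norm_sq_to_K] at h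
  norm_cast at h
  nlinarith [norm_nonneg a, norm_nonneg b]

lemma E_main {S₁ : Submodule ℂ (H × K₁)} {S₂ : Submodule ℂ (H × K₂)}
    (hS₁ : IsClosed (S₁ : Set (H × K₁))) (hS₂ : IsClosed (S₂ : Set (H × K₂)))
    (hAA : relComp (relAdj S₁) S₁ = relComp (relAdj S₂) S₂)
    {x : H} {y : K₂} (hxy : (x, y) ∈ S₂) (hy : y ∈ (relMul S₂)ᗮ) :
    ∃ z, (x, z) ∈ opPart S₁ ∧ ‖z‖ = ‖y‖ := by
  classical
  obtain ⟨f, g, hfg, hfd, hfl, hgl⟩ := dense_graph hS₂ hxy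
  -- the S₂-side operator parts
  set j : ℕ → K₂ := fun n => (Submodule.orthogonalProjectionOnto (relMul S₂)ᗮ (g n) : K₂) with hj
  have hjop : ∀ n, (f n, j n) ∈ opPart S₂ := fun n => opPart_mem (hfg n)
  -- choose the A-values
  have hfd' : ∀ n, ∃ w, (f n, w) ∈ relComp (relAdj S₂) S₂ := fun n => mem_relDom.mp (hfd n)
  choose w hw using hfd'
  have hw₁ : ∀ n, (f n, w n) ∈ relComp (relAdj S₁) S₁ := fun n => hAA ▸ hw n
  -- choose the S₁-side elements and operator parts
  have hfS₁ : ∀ n, ∃ φ, (f n, φ) ∈ S₁ := by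
    intro n
    obtain ⟨φ, h1, -⟩ := hw₁ n
    exact ⟨φ, h1⟩
  choose φ hφ using hfS₁
  set k : ℕ → K₁ := fun n => (Submodule.orthogonalProjectionOnto (relMul S₁)ᗮ (φ n) : K₁) with hk
  have hkop : ∀ n, (f n, k n) ∈ opPart S₁ := fun n => opPart_mem (hφ n)
  -- norm equality for differences
  have hnormdiff : ∀ n m, ‖k n - k m‖ = ‖j n - j m‖ := by
    intro n m
    have hA₁ : (f n - f m, w n - w m) ∈ relComp (relAdj S₁) S₁ := by
      simpa using (relComp (relAdj S₁) S₁).sub_mem (hw₁ n) (hw₁ m)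
    have hA₂ : (f n - f m, w n - w m) ∈ relComp (relAdj S₂) S₂ := by
      simpa using (relComp (relAdj S₂) S₂).sub_mem (hw n) (hw m)
    have hop₁ : (f n - f m, k n - k m) ∈ opPart S₁ := by
      simpa using (opPart S₁).sub_mem (hkop n) (hkop m)
    have hop₂ : (f n - f m, j n - j m) ∈ opPart S₂ := by
      simpa using (opPart S₂).sub_mem (hjop n) (hjop m)
    have e1 := opPart_normSq hS₁ hA₁ hop₁
    have e2 := opPart_normSq hS₂ hA₂ hop₂
    exact norm_eq_of_inner_self (e1.trans e2.symm)
  -- k is Cauchy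
  have hgC : CauchySeq g := hgl.cauchySeq
  have hkC : CauchySeq k := by
    rw [Metric.cauchySeq_iff] at hgC ⊢
    intro ε hε
    obtain ⟨N, hN⟩ := hgC ε hε
    refine ⟨N, fun n hn m hm => ?_⟩
    have := hN n hn m hm
    rw [dist_eq_norm] at this ⊢
    rw [hnormdiff n m]
    calc ‖j n - j m‖ = ‖(Submodule.orthogonalProjectionOnto (relMul S₂)ᗮ (g n - g m) : K₂)‖ := by
          rw [hj]; simp [map_sub]
      _ ≤ ‖g n - g m‖ := by
          have := Submodule.orthogonalProjectionOnto_norm_le (K := (relMul S₂)ᗮ)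
          calc ‖(Submodule.orthogonalProjectionOnto (relMul S₂)ᗮ (g n - g m) : K₂)‖
              = ‖Submodule.orthogonalProjectionOnto (relMul S₂)ᗮ (g n - g m)‖ := by
                rw [Submodule.norm_coe]
            _ ≤ ‖Submodule.orthogonalProjectionOnto (relMul S₂)ᗮ‖ * ‖g n - g m‖ :=
                (Submodule.orthogonalProjectionOnto (relMul S₂)ᗮ).le_opNorm _
            _ ≤ 1 * ‖g n - g m‖ :=
                mul_le_mul_of_nonneg_right this (norm_nonneg _)
            _ = ‖g n - g m‖ := one_mul _
      _ < ε := this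
  obtain ⟨z, hzlim⟩ := cauchySeq_tendsto_of_complete hkC
  -- (x, z) ∈ S₁ and z ∈ (relMul S₁)ᗮ
  have hxz : (x, z) ∈ S₁ := by
    have hmem : ∀ n, (f n, k n) ∈ (S₁ : Set (H × K₁)) := fun n => (opPart_subset hS₁ (hkop n)).1
    have htend : Tendsto (fun n => (f n, k n)) atTop (nhds (x, z)) := hfl.prodMk_nhds hzlim
    exact hS₁.mem_of_tendsto htend (Eventually.of_forall hmem)
  have hzperp : z ∈ (relMul S₁)ᗮ := by
    have hcl : IsClosed ((relMul S₁)ᗮ : Set K₁) := Submodule.isClosed_orthogonal _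
    refine hcl.mem_of_tendsto hzlim (Eventually.of_forall fun n => ?_)
    exact SetLike.coe_mem _
  have hzop : (x, z) ∈ opPart S₁ := by
    have := opPart_mem hxz
    rwa [← Submodule.starProjection_apply, Submodule.starProjection_eq_self_iff.mpr hzperp] at this
  -- norm equality in the limit
  have hnorms : ∀ n, ‖k n‖ = ‖j n‖ := by
    intro n
    have e1 := opPart_normSq hS₁ (hw₁ n) (hkop n)
    have e2 := opPart_normSq hS₂ (hw n) (hjop n)
    exact norm_eq_of_inner_self (e1.trans e2.symm)
  have hjlim : Tendsto j atTop (nhds y) := by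
    have hcont : Continuous fun v : K₂ => (Submodule.orthogonalProjectionOnto (relMul S₂)ᗮ v : K₂) :=
      continuous_subtype_val.comp (Submodule.orthogonalProjectionOnto (relMul S₂)ᗮ).continuous
    have := (hcont.tendsto y).comp hgl
    have hPy : (Submodule.orthogonalProjectionOnto (relMul S₂)ᗮ y : K₂) = y :=
      Submodule.starProjection_eq_self_iff.mpr hy
    rw [Function.comp_def] at this
    simpa [hj, hPy] using this
  have hn1 : Tendsto (fun n => ‖k n‖) atTop (nhds ‖z‖) := (continuous_norm.tendsto z).comp hzlim
  have hn2 : Tendsto (fun n => ‖j n‖) atTop (nhds ‖y‖) := (continuous_norm.tendsto y).comp hjlim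
  have : ‖z‖ = ‖y‖ := by
    refine tendsto_nhds_unique ?_ hn2
    simpa [hnorms] using hn1
  exact ⟨z, hzop, this⟩

lemma transfer {S₁ : Submodule ℂ (H × K₁)} {S₂ : Submodule ℂ (H × K₂)}
    (hS₁ : IsClosed (S₁ : Set (H × K₁))) (hS₂ : IsClosed (S₂ : Set (H × K₂)))
    (hAA : relComp (relAdj S₁) S₁ = relComp (relAdj S₂) S₂) :
    relDom S₂ ⊆ relDom S₁ ∧
      ∀ h k₁ k₂, (h, k₁) ∈ opPart S₁ → (h, k₂) ∈ opPart S₂ → ‖k₁‖ = ‖k₂‖ := by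
  constructor
  · intro x hx
    obtain ⟨y, hy⟩ := mem_relDom.mp hx
    have hop := opPart_mem hy
    obtain ⟨hmem, hperp⟩ := opPart_subset hS₂ hop
    obtain ⟨z, hz, -⟩ := E_main hS₁ hS₂ hAA hmem hperp
    exact mem_relDom.mpr ⟨z, (opPart_subset hS₁ hz).1⟩
  · intro h k₁ k₂ h1 h2
    obtain ⟨hmem, hperp⟩ := opPart_subset hS₂ h2
    obtain ⟨z, hz, hnz⟩ := E_main hS₁ hS₂ hAA hmem hperp
    rw [opPart_unique h1 hz]
    exact hnz

end PartE
section PartF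

open ContinuousLinearMap Pointwise

variable {H K : Type*} [NormedAddCommGroup H] [InnerProductSpace ℂ H] [CompleteSpace H]
  [NormedAddCommGroup K] [InnerProductSpace ℂ K] [CompleteSpace K]

lemma sqrtPair (C : H →L[ℂ] H) (hsa : IsSelfAdjoint C) (h0 : (0 : H →L[ℂ] H) ≤ C)
    (h1 : (0 : H →L[ℂ] H) ≤ 1 - C) :
    ∃ D E : H →L[ℂ] H, IsSelfAdjoint D ∧ IsSelfAdjoint E ∧ D * D = C ∧ E * E = 1 - C ∧
      D * E = E * D ∧ (0 : H →L[ℂ] H) ≤ D * E := by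
  have spec0 : ∀ x ∈ spectrum ℝ C, (0 : ℝ) ≤ x :=
    (StarOrderedRing.nonneg_iff_spectrum_nonneg (R := ℝ) C).mp h0
  have spec1 : ∀ x ∈ spectrum ℝ C, x ≤ 1 := by
    intro x hx
    have hmem : (1 : ℝ) - x ∈ ({(1 : ℝ)} : Set ℝ) - spectrum ℝ C :=
      Set.sub_mem_sub (Set.mem_singleton 1) hx
    rw [spectrum.singleton_sub_eq] at hmem
    have h1' : (algebraMap ℝ (H →L[ℂ] H)) 1 - C = 1 - C := by rw [map_one]
    rw [h1'] at hmem
    have := (StarOrderedRing.nonneg_iff_spectrum_nonneg (R := ℝ) (1 - C)).mp h1 _ hmem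
    linarith
  have hcont1 : ContinuousOn Real.sqrt (spectrum ℝ C) := Real.continuous_sqrt.continuousOn
  have hcont2 : ContinuousOn (fun x : ℝ => Real.sqrt (1 - x)) (spectrum ℝ C) :=
    (Real.continuous_sqrt.comp (continuous_const.sub continuous_id)).continuousOn
  refine ⟨cfc Real.sqrt C, cfc (fun x : ℝ => Real.sqrt (1 - x)) C,
    cfc_predicate _ C, cfc_predicate _ C, ?_, ?_, ?_, ?_⟩
  · rw [← cfc_mul _ _ C hcont1 hcont1]
    have : cfc (fun x => Real.sqrt x * Real.sqrt x) C = cfc (fun x : ℝ => x) C :=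
      cfc_congr fun x hx => Real.mul_self_sqrt (spec0 x hx)
    rw [this, cfc_id' ℝ C]
  · rw [← cfc_mul _ _ C hcont2 hcont2]
    have e1 : cfc (fun x => Real.sqrt (1 - x) * Real.sqrt (1 - x)) C
        = cfc (fun x : ℝ => 1 - x) C :=
      cfc_congr fun x hx => Real.mul_self_sqrt (by linarith [spec1 x hx])
    have h1c : cfc (fun _ : ℝ => (1 : ℝ)) C = 1 := cfc_one ℝ C
    rw [e1, cfc_sub (fun _ : ℝ => (1 : ℝ)) (fun x : ℝ => x) C continuousOn_const
      (continuousOn_id (s := spectrum ℝ C)), cfc_id' ℝ C, h1c]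
  · rw [← cfc_mul _ _ C hcont1 hcont2, ← cfc_mul _ _ C hcont2 hcont1]
    exact cfc_congr fun x _ => mul_comm _ _
  · rw [← cfc_mul _ _ C hcont1 hcont2]
    exact cfc_nonneg fun x hx => mul_nonneg (Real.sqrt_nonneg _) (Real.sqrt_nonneg _)

/-- The square-root relation `{(D u, E u)}` defined implicitly. -/
def sqrtRel (D E : H →L[ℂ] H) : Submodule ℂ (H × H) where
  carrier := {p | E p.1 = D p.2}
  add_mem' := by
    intro a b ha hb
    simp only [Set.mem_setOf_eq, Prod.fst_add, Prod.snd_add, map_add] at *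
    rw [ha, hb]
  zero_mem' := by simp
  smul_mem' := by
    intro c a ha
    simp only [Set.mem_setOf_eq, Prod.smul_fst, Prod.smul_snd, map_smul] at *
    rw [ha]

variable {C D E : H →L[ℂ] H}

section sqrtRelFacts

variable (hDD : D * D = C) (hEE : E * E = 1 - C) (hDE : D * E = E * D)

include hDD hEE hDE in
lemma sqrtRel_param {p : H × H} :
    p ∈ sqrtRel D E ↔ ∃ u, p.1 = D u ∧ p.2 = E u := by
  have hC : ∀ v, D (D v) = C v := fun v => by
    have := congrArg (fun T : H →L[ℂ] H => T v) hDD; simpa using this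
  have hE : ∀ v, E (E v) = v - C v := fun v => by
    have := congrArg (fun T : H →L[ℂ] H => T v) hEE
    simpa [ContinuousLinearMap.sub_apply] using this
  have hcomm : ∀ v, D (E v) = E (D v) := fun v => by
    have := congrArg (fun T : H →L[ℂ] H => T v) hDE; simpa using this
  constructor
  · intro hp
    have hp' : E p.1 = D p.2 := hp
    refine ⟨D p.1 + E p.2, ?_, ?_⟩
    · rw [map_add, hC]
      have : D (E p.2) = E (E p.1) := by rw [hcomm, ← hp']
      rw [this, hE]
      abel
    · rw [map_add]
      have h1 : E (D p.1) = D (D p.2) := by rw [← hcomm, hp']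
      rw [h1, hC, hE]
      abel
  · rintro ⟨u, h1, h2⟩
    show E p.1 = D p.2
    rw [h1, h2, hcomm]

end sqrtRelFacts

end PartF
section PartG

open ContinuousLinearMap

variable {H K : Type*} [NormedAddCommGroup H] [InnerProductSpace ℂ H] [CompleteSpace H]
  [NormedAddCommGroup K] [InnerProductSpace ℂ K] [CompleteSpace K]
  {C D E : H →L[ℂ] H}

lemma sqrtRel_nonneg (hsaD : IsSelfAdjoint D)
    (hDD : D * D = C) (hEE : E * E = 1 - C) (hDE : D * E = E * D)
    (hpos : (0 : H →L[ℂ] H) ≤ D * E) : relNonneg (sqrtRel D E) := by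
  intro p hp
  obtain ⟨u, h1, h2⟩ := (sqrtRel_param hDD hEE hDE).mp hp
  rw [h1, h2]
  have hadj : ContinuousLinearMap.adjoint D = D := isSelfAdjoint_iff'.mp hsaD
  have hmoveD : ∀ a b : H, (inner ℂ (D a) b : ℂ) = inner ℂ a (D b) := fun a b => by
    conv_lhs => rw [← hadj]
    exact ContinuousLinearMap.adjoint_inner_left D b a
  have key : (inner ℂ (E u) (D u) : ℂ) = inner ℂ ((D * E) u) u := by
    rw [ContinuousLinearMap.mul_apply]
    exact (hmoveD (E u) u).symm
  rw [key]
  have hP := (isPositive_iff_complex (D * E)).mp ((nonneg_iff_isPositive _).mp hpos) u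
  rw [← hP.1]
  exact_mod_cast hP.2

lemma sqrtRel_selfAdj (hsaD : IsSelfAdjoint D) (hsaE : IsSelfAdjoint E)
    (hDD : D * D = C) (hEE : E * E = 1 - C) (hDE : D * E = E * D) :
    relSelfAdj (sqrtRel D E) := by
  have hadjD : ContinuousLinearMap.adjoint D = D := isSelfAdjoint_iff'.mp hsaD
  have hadjE : ContinuousLinearMap.adjoint E = E := isSelfAdjoint_iff'.mp hsaE
  have hmoveD : ∀ a b : H, (inner ℂ (D a) b : ℂ) = inner ℂ a (D b) := fun a b => by
    conv_lhs => rw [← hadjD]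
    exact ContinuousLinearMap.adjoint_inner_left D b a
  have hmoveE : ∀ a b : H, (inner ℂ (E a) b : ℂ) = inner ℂ a (E b) := fun a b => by
    conv_lhs => rw [← hadjE]
    exact ContinuousLinearMap.adjoint_inner_left E b a
  have hcomm : ∀ v, D (E v) = E (D v) := fun v => by
    have := congrArg (fun T : H →L[ℂ] H => T v) hDE; simpa using this
  apply le_antisymm
  · -- relAdj (sqrtRel D E) ⊆ sqrtRel D E
    intro q hq
    have key : ∀ v : H, (inner ℂ (E v) q.1 : ℂ) = inner ℂ (D v) q.2 := by
      intro v
      exact hq (D v, E v) ((sqrtRel_param hDD hEE hDE).mpr ⟨v, rfl, rfl⟩)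
    have : E q.1 = D q.2 := by
      apply ext_inner_left ℂ
      intro v
      calc (inner ℂ v (E q.1) : ℂ) = inner ℂ (E v) q.1 := (hmoveE v q.1).symm
        _ = inner ℂ (D v) q.2 := key v
        _ = inner ℂ v (D q.2) := hmoveD v q.2
    exact this
  · -- sqrtRel D E ⊆ relAdj (sqrtRel D E)
    intro q hq
    obtain ⟨u, h1, h2⟩ := (sqrtRel_param hDD hEE hDE).mp hq
    intro p hp
    obtain ⟨v, h3, h4⟩ := (sqrtRel_param hDD hEE hDE).mp hp
    rw [h1, h2, h3, h4]
    calc (inner ℂ (E v) (D u) : ℂ) = inner ℂ (D (E v)) u := (hmoveD (E v) u).symm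
      _ = inner ℂ (E (D v)) u := by rw [hcomm]
      _ = inner ℂ (D v) (E u) := hmoveE (D v) u

lemma sqrtRel_comp {S : Submodule ℂ (H × K)} {G : H →L[ℂ] K}
    (hCm : ∀ h, (C h, G h) ∈ S) (hGm : ∀ h, (G h, h - C h) ∈ relAdj S)
    (hDD : D * D = C) (hEE : E * E = 1 - C) (hDE : D * E = E * D) :
    relComp (sqrtRel D E) (sqrtRel D E) = relComp (relAdj S) S := by
  have hC' : ∀ v, D (D v) = C v := fun v => by
    have := congrArg (fun T : H →L[ℂ] H => T v) hDD; simpa using this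
  have hE' : ∀ v, E (E v) = v - C v := fun v => by
    have := congrArg (fun T : H →L[ℂ] H => T v) hEE
    simpa [ContinuousLinearMap.sub_apply] using this
  have hcomm : ∀ v, D (E v) = E (D v) := fun v => by
    have := congrArg (fun T : H →L[ℂ] H => T v) hDE; simpa using this
  ext p
  rw [AA_mem_iff hCm hGm]
  constructor
  · rintro ⟨φ, h1, h2⟩
    obtain ⟨u, hu1, hu2⟩ := (sqrtRel_param hDD hEE hDE).mp h1
    obtain ⟨v, hv1, hv2⟩ := (sqrtRel_param hDD hEE hDE).mp h2
    have hφ : E u = D v := by rw [← hu2, ← hv1]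
    refine ⟨D u + E v, ?_⟩
    have hfst : C (D u + E v) = D u := by
      rw [map_add]
      have e1 : C (D u) = D (C u) := by rw [← hC' u, ← hC' (D u)]
      have e2 : C (E v) = D u - D (C u) := by
        have : D (E v) = u - C u := by rw [hcomm, ← hφ, hE']
        rw [← hC' (E v), this, map_sub]
      rw [e1, e2]
      abel
    refine Prod.ext_iff.mpr ⟨?_, ?_⟩
    · show p.1 = C (D u + E v)
      rw [hu1, hfst]
    · show p.2 = D u + E v - C (D u + E v)
      rw [hv2, hfst]
      abel
  · rintro ⟨h, rfl⟩
    refine ⟨E (D h), ?_, ?_⟩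
    · exact (sqrtRel_param hDD hEE hDE).mpr ⟨D h, (hC' h).symm, rfl⟩
    · exact (sqrtRel_param hDD hEE hDE).mpr ⟨E h, (hcomm h).symm, (hE' h).symm⟩

/-- Existence of a nonnegative selfadjoint square root of `S*S`. -/
lemma exists_sqrt_rel {S : Submodule ℂ (H × K)} (hS : IsClosed (S : Set (H × K))) :
    ∃ Kk : Submodule ℂ (H × H), relNonneg Kk ∧ relSelfAdj Kk ∧
      relComp Kk Kk = relComp (relAdj S) S := by
  obtain ⟨C, G, hCm, hGm, hnorm⟩ := vn_operators hS
  have hsym : (C : H →ₗ[ℂ] H).IsSymmetric := fun x y => vnC_symm hCm hGm x y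
  have hsa : IsSelfAdjoint C := isSelfAdjoint_iff_isSymmetric.mpr hsym
  have h0 : (0 : H →L[ℂ] H) ≤ C := by
    rw [nonneg_iff_isPositive, ContinuousLinearMap.isPositive_def']
    refine ⟨hsa, fun x => ?_⟩
    have := vnC_quad hCm hGm x
    unfold ContinuousLinearMap.reApplyInnerSelf
    rw [this]
    have hp : (0:ℝ) ≤ ‖C x‖ ^ 2 + ‖G x‖ ^ 2 := by positivity
    simpa [← Complex.ofReal_pow] using hp
  have h1 : (0 : H →L[ℂ] H) ≤ 1 - C := by
    rw [nonneg_iff_isPositive, ContinuousLinearMap.isPositive_def']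
    refine ⟨(IsSelfAdjoint.one (H →L[ℂ] H)).sub hsa, fun x => ?_⟩
    unfold ContinuousLinearMap.reApplyInnerSelf
    rw [ContinuousLinearMap.sub_apply, inner_sub_left, ContinuousLinearMap.one_apply,
      vnC_quad hCm hGm x]
    have e1 : RCLike.re (inner ℂ x x : ℂ) = ‖x‖ ^ 2 := inner_self_eq_norm_sq x
    have e2 : RCLike.re ((((‖C x‖ ^ 2 + ‖G x‖ ^ 2 : ℝ)) : ℂ)) = ‖C x‖ ^ 2 + ‖G x‖ ^ 2 := by
      simp [← Complex.ofReal_pow]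
    rw [map_sub, e1, e2]
    have hb := hnorm x
    linarith
  obtain ⟨D, E, hsaD, hsaE, hDD, hEE, hDE, hpos⟩ := sqrtPair C hsa h0 h1
  exact ⟨sqrtRel D E, sqrtRel_nonneg hsaD hDD hEE hDE hpos,
    sqrtRel_selfAdj hsaD hsaE hDD hEE hDE, sqrtRel_comp hCm hGm hDD hEE hDE⟩

end PartG
theorem stmt_5 {𝓗 𝓚₁ 𝓚₂ : Type*}
    [NormedAddCommGroup 𝓗] [InnerProductSpace ℂ 𝓗] [CompleteSpace 𝓗]
    [NormedAddCommGroup 𝓚₁] [InnerProductSpace ℂ 𝓚₁] [CompleteSpace 𝓚₁]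
    [NormedAddCommGroup 𝓚₂] [InnerProductSpace ℂ 𝓚₂] [CompleteSpace 𝓚₂]
    (T₁ : Submodule ℂ (𝓗 × 𝓚₁)) (T₂ : Submodule ℂ (𝓗 × 𝓚₂))
    (h₁ : IsClosed (T₁ : Set (𝓗 × 𝓚₁))) (h₂ : IsClosed (T₂ : Set (𝓗 × 𝓚₂))) :
    RelLE (relComp (relAdj T₁) T₁) (relComp (relAdj T₂) T₂) ↔
      relDom T₂ ⊆ relDom T₁ ∧
      ∀ h k₁ k₂, (h, k₁) ∈ opPart T₁ → (h, k₂) ∈ opPart T₂ → ‖k₁‖ ≤ ‖k₂‖ := by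
  constructor
  · rintro ⟨K₁, K₂, hn1, hsa1, hc1, hn2, hsa2, hc2, hdom, hnorm⟩
    have hK₁c : IsClosed (K₁ : Set (𝓗 × 𝓗)) := by
      rw [← hsa1]; exact relAdj_isClosed K₁
    have hK₂c : IsClosed (K₂ : Set (𝓗 × 𝓗)) := by
      rw [← hsa2]; exact relAdj_isClosed K₂
    have hAA1 : relComp (relAdj K₁) K₁ = relComp (relAdj T₁) T₁ := by rw [hsa1, hc1]
    have hAA2 : relComp (relAdj K₂) K₂ = relComp (relAdj T₂) T₂ := by rw [hsa2, hc2]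
    obtain ⟨hdKT1, hnKT1⟩ := transfer hK₁c h₁ hAA1
    obtain ⟨hdTK1, hnTK1⟩ := transfer h₁ hK₁c hAA1.symm
    obtain ⟨hdKT2, hnKT2⟩ := transfer hK₂c h₂ hAA2
    obtain ⟨hdTK2, hnTK2⟩ := transfer h₂ hK₂c hAA2.symm
    constructor
    · intro x hx
      exact hdTK1 (hdom (hdKT2 hx))
    · intro h k₁ k₂ hk₁ hk₂
      have hhT2 : h ∈ relDom T₂ := mem_relDom.mpr ⟨k₂, (opPart_subset h₂ hk₂).1⟩
      have hhK2 : h ∈ relDom K₂ := hdKT2 hhT2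
      obtain ⟨j₂, hj₂⟩ := exists_opPart hhK2
      have hhK1 : h ∈ relDom K₁ := hdom hhK2
      obtain ⟨j₁, hj₁⟩ := exists_opPart hhK1
      have e1 : ‖j₁‖ = ‖k₁‖ := hnKT1 h j₁ k₁ hj₁ hk₁
      have e2 : ‖j₂‖ = ‖k₂‖ := hnKT2 h j₂ k₂ hj₂ hk₂
      calc ‖k₁‖ = ‖j₁‖ := e1.symm
        _ ≤ ‖j₂‖ := hnorm h j₁ j₂ hj₁ hj₂
        _ = ‖k₂‖ := e2
  · rintro ⟨hdom, hnorm⟩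
    obtain ⟨K₁, hn1, hsa1, hc1⟩ := exists_sqrt_rel h₁
    obtain ⟨K₂, hn2, hsa2, hc2⟩ := exists_sqrt_rel h₂
    have hK₁c : IsClosed (K₁ : Set (𝓗 × 𝓗)) := by
      rw [← hsa1]; exact relAdj_isClosed K₁
    have hK₂c : IsClosed (K₂ : Set (𝓗 × 𝓗)) := by
      rw [← hsa2]; exact relAdj_isClosed K₂
    have hAA1 : relComp (relAdj K₁) K₁ = relComp (relAdj T₁) T₁ := by rw [hsa1, hc1]
    have hAA2 : relComp (relAdj K₂) K₂ = relComp (relAdj T₂) T₂ := by rw [hsa2, hc2]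
    obtain ⟨hdKT1, hnKT1⟩ := transfer hK₁c h₁ hAA1
    obtain ⟨hdTK1, hnTK1⟩ := transfer h₁ hK₁c hAA1.symm
    obtain ⟨hdKT2, hnKT2⟩ := transfer hK₂c h₂ hAA2
    obtain ⟨hdTK2, hnTK2⟩ := transfer h₂ hK₂c hAA2.symm
    refine ⟨K₁, K₂, hn1, hsa1, hc1, hn2, hsa2, hc2, ?_, ?_⟩
    · intro x hx
      exact hdKT1 (hdom (hdTK2 hx))
    · intro h j₁ j₂ hj₁ hj₂
      have hhK2 : h ∈ relDom K₂ := mem_relDom.mpr ⟨j₂, (opPart_subset hK₂c hj₂).1⟩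
      have hhT2 : h ∈ relDom T₂ := hdTK2 hhK2
      obtain ⟨k₂, hk₂⟩ := exists_opPart hhT2
      have hhT1 : h ∈ relDom T₁ := hdom hhT2
      obtain ⟨k₁, hk₁⟩ := exists_opPart hhT1
      have e1 : ‖j₁‖ = ‖k₁‖ := hnKT1 h j₁ k₁ hj₁ hk₁
      have e2 : ‖j₂‖ = ‖k₂‖ := hnKT2 h j₂ k₂ hj₂ hk₂
      calc ‖j₁‖ = ‖k₁‖ := e1
        _ ≤ ‖k₂‖ := hnorm h k₁ k₂ hk₁ hk₂
        _ = ‖j₂‖ := e2.symm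
end
end

section
/- Let ℌ_A, ℌ_B, and ℌ be Hilbert spaces, let A be a linear relation from ℌ_A to ℌ, and let B be a linear relation from ℌ_B to ℌ. Then ran A ⊆ ran B if and only if there exists a linear relation W from ℌ_A to ℌ_B such that A ⊆ BW. -/
open scoped ComplexOrder

set_option synthInstance.maxHeartbeats 1000000
set_option maxHeartbeats 1000000

noncomputable section

variable {E F G : Type*}

theorem stmt_6 {𝓗A 𝓗B 𝓗 : Type*}
    [NormedAddCommGroup 𝓗A] [InnerProductSpace ℂ 𝓗A] [CompleteSpace 𝓗A]
    [NormedAddCommGroup 𝓗B] [InnerProductSpace ℂ 𝓗B] [CompleteSpace 𝓗B]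
    [NormedAddCommGroup 𝓗] [InnerProductSpace ℂ 𝓗] [CompleteSpace 𝓗]
    (A : Submodule ℂ (𝓗A × 𝓗)) (B : Submodule ℂ (𝓗B × 𝓗)) :
    relRan A ⊆ relRan B ↔ ∃ W : Submodule ℂ (𝓗A × 𝓗B), A ≤ relComp B W := by
  constructor
  · intro h
    refine ⟨relComp (relInv B) A, ?_⟩
    rintro ⟨f, f'⟩ hfA
    obtain ⟨⟨g, g'⟩, hgB, rfl⟩ := h ⟨⟨f, f'⟩, hfA, rfl⟩
    exact ⟨g, ⟨g', hfA, hgB⟩, hgB⟩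
  · rintro ⟨W, hW⟩ y ⟨⟨f, f'⟩, hfA, rfl⟩
    obtain ⟨φ, _, hB⟩ := hW hfA
    exact ⟨(φ, f'), hB, rfl⟩
end
end
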